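/- Let (V,g) be a pseudo-Euclidean space of dimension 2m which is the direct sum V = V₊ ⊕ V₋ of two totally isotropic subspaces (each then of dimension m). Let c be a nonzero real number, let B be the endomorphism of V equal to c·Id on V₊ and to −c·Id on V₋ (such B is g-skew-adjoint), let u ∈ V with u ∉ V₋, and define v : V → V by v(x) = Bx + cx + 2·g(u,x)·x − g(x,x)·u. Then: (1) ker Dv_0 = V₋, which has dimension m; (2) every x ∈ V₋ with g(u,x) = 0 satisfies v(x) = 0; and (3) for every nonzero x ∈ V₋ with g(u,x) = 0 one has ker Dv_x = {y ∈ V₋ : g(u,y) = 0}, which has dimension m − 1. In particular, the dimension of ker Dv_x is not constant on the zero set of v near 0. -/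

import Mathlib

open Module

/-- Auxiliary: an isotropic subspace complementary-spanning with `W'` has rank at most
that of `W'`, via the injection `W → Dual W'` induced by the nondegenerate form. -/
lemma aux_finrank_le {V : Type*} [AddCommGroup V] [Module ℝ V] [FiniteDimensional ℝ V]
    (g : V →ₗ[ℝ] V →ₗ[ℝ] ℝ)
    (hg_nondeg : ∀ x : V, (∀ y : V, g x y = 0) → x = 0)
    (W W' : Submodule ℝ V) (hsup : W ⊔ W' = ⊤)
    (hiso : ∀ x ∈ W, ∀ y ∈ W, g x y = 0) :
    Module.finrank ℝ W ≤ Module.finrank ℝ W' := by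
  let φ : W →ₗ[ℝ] Module.Dual ℝ W' :=
    { toFun := fun w => (g w.1).domRestrict W'
      map_add' := by intro a b; ext y; simp
      map_smul' := by intro r a; ext y; simp }
  have hinj : Function.Injective φ := by
    intro a b hab
    have h0 : φ (a - b) = 0 := by rw [map_sub, hab, sub_self]
    have : (a : V) - (b : V) = 0 := by
      apply hg_nondeg
      intro y
      have hy : y ∈ W ⊔ W' := by rw [hsup]; trivial
      obtain ⟨p, hp, q, hq, rfl⟩ := Submodule.mem_sup.1 hy
      have h1 : g ((a : V) - b) p = 0 :=
        hiso _ (Submodule.sub_mem _ a.2 b.2) _ hp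
      have h2 : g ((a : V) - b) q = 0 := by
        have := congrFun (congrArg DFunLike.coe h0) ⟨q, hq⟩
        simpa [φ] using this
      rw [map_add (g ((a:V) - b)) p q, h1, h2, add_zero]
    exact Subtype.ext (sub_eq_zero.mp this)
  calc Module.finrank ℝ W ≤ Module.finrank ℝ (Module.Dual ℝ W') :=
        LinearMap.finrank_le_finrank_of_injective hinj
    _ = Module.finrank ℝ W' := Subspace.dual_finrank_eq

/-- Auxiliary: pointwise formula for the Fréchet derivative of `v`. -/
lemma aux_fderiv {V : Type*} [NormedAddCommGroup V] [NormedSpace ℝ V] [FiniteDimensional ℝ V]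
    (g : V →ₗ[ℝ] V →ₗ[ℝ] ℝ) (c : ℝ) (B : V →ₗ[ℝ] V) (u : V) (v : V → V)
    (hv : ∀ x : V, v x = B x + c • x + (2 * g u x) • x - (g x x) • u) (x y : V) :
    fderiv ℝ v x y =
      B y + c • y + ((2 * g u x) • y + (2 * g u y) • x) - (g x y + g y x) • u := by
  have hveq : v = fun z => B z + c • z + (2 * g u z) • z - (g z z) • u := funext hv
  subst hveq
  let G : V →L[ℝ] V →L[ℝ] ℝ :=
    LinearMap.toContinuousLinearMap
      { toFun := fun a => LinearMap.toContinuousLinearMap (g a)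
        map_add' := by intro a b; ext z; simp
        map_smul' := by intro r a; ext z; simp }
  have hB : HasFDerivAt (fun z : V => B z) (LinearMap.toContinuousLinearMap B) x :=
    (LinearMap.toContinuousLinearMap B).hasFDerivAt
  have hid : HasFDerivAt (fun z : V => z) (ContinuousLinearMap.id ℝ V) x := hasFDerivAt_id x
  have hsc : HasFDerivAt (fun z : V => c • z) (c • ContinuousLinearMap.id ℝ V) x :=
    hid.const_smul c
  have hgu : HasFDerivAt (fun z : V => g u z) (LinearMap.toContinuousLinearMap (g u)) x :=
    (LinearMap.toContinuousLinearMap (g u)).hasFDerivAt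
  have hmul : HasFDerivAt (fun z : V => 2 * g u z)
      ((2:ℝ) • LinearMap.toContinuousLinearMap (g u)) x := hgu.const_mul 2
  have hsmul := hmul.smul hid
  have hbil : IsBoundedBilinearMap ℝ (fun p : V × V => G p.1 p.2) := G.isBoundedBilinearMap
  have hdiag : HasFDerivAt (fun z : V => (z, z))
      ((ContinuousLinearMap.id ℝ V).prod (ContinuousLinearMap.id ℝ V)) x :=
    HasFDerivAt.prodMk (hasFDerivAt_id x) (hasFDerivAt_id x)
  have h' := HasFDerivAt.comp (f := fun z : V => (z, z)) x (hbil.hasFDerivAt (x, x)) hdiag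
  have hquad : HasFDerivAt (fun z : V => g z z)
      ((hbil.deriv (x, x)).comp
        ((ContinuousLinearMap.id ℝ V).prod (ContinuousLinearMap.id ℝ V))) x := h'
  have hqu := hquad.smul_const u
  have htot := ((hB.add hsc).add hsmul).sub hqu
  rw [HasFDerivAt.fderiv (f := fun z => B z + c • z + (2 * g u z) • z - (g z z) • u) htot]
  have hGg : ∀ a b : V, G a b = g a b := fun a b => rfl
  simp [ContinuousLinearMap.add_apply, ContinuousLinearMap.sub_apply,
    ContinuousLinearMap.smul_apply, ContinuousLinearMap.smulRight_apply,
    ContinuousLinearMap.comp_apply, ContinuousLinearMap.prod_apply, hGg,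
    smul_smul, add_smul]

theorem stmt1
    {V : Type*} [NormedAddCommGroup V] [NormedSpace ℝ V] [FiniteDimensional ℝ V]
    (g : V →ₗ[ℝ] V →ₗ[ℝ] ℝ)
    (hg_symm : ∀ x y : V, g x y = g y x)
    (hg_nondeg : ∀ x : V, (∀ y : V, g x y = 0) → x = 0)
    (m : ℕ) (hdim : Module.finrank ℝ V = 2 * m)
    (Vp Vm : Submodule ℝ V) (hcompl : IsCompl Vp Vm)
    (hVp_iso : ∀ x ∈ Vp, ∀ y ∈ Vp, g x y = 0)
    (hVm_iso : ∀ x ∈ Vm, ∀ y ∈ Vm, g x y = 0)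
    (c : ℝ) (hc : c ≠ 0)
    (B : V →ₗ[ℝ] V)
    (hBp : ∀ x ∈ Vp, B x = c • x)
    (hBm : ∀ x ∈ Vm, B x = -c • x)
    (u : V) (hu : u ∉ Vm)
    (v : V → V)
    (hv : ∀ x : V, v x = B x + c • x + (2 * g u x) • x - (g x x) • u) :
    (LinearMap.ker (fderiv ℝ v 0 : V →ₗ[ℝ] V) = Vm ∧ Module.finrank ℝ Vm = m) ∧
    (∀ x ∈ Vm, g u x = 0 → v x = 0) ∧
    (∀ x ∈ Vm, x ≠ 0 → g u x = 0 →
      LinearMap.ker (fderiv ℝ v x : V →ₗ[ℝ] V) = Vm ⊓ LinearMap.ker (g u) ∧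
      Module.finrank ℝ (Vm ⊓ LinearMap.ker (g u) : Submodule ℝ V) = m - 1) := by
  have hsup : Vp ⊔ Vm = ⊤ := hcompl.sup_eq_top
  have hdecomp : ∀ y : V, ∃ p ∈ Vp, ∃ q ∈ Vm, y = p + q := by
    intro y
    have hy : y ∈ Vp ⊔ Vm := by rw [hsup]; trivial
    obtain ⟨p, hp, q, hq, h⟩ := Submodule.mem_sup.1 hy
    exact ⟨p, hp, q, hq, h.symm⟩
  have hVm_m : Module.finrank ℝ Vm = m := by
    have h1 := aux_finrank_le g hg_nondeg Vp Vm hsup hVp_iso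
    have h2 := aux_finrank_le g hg_nondeg Vm Vp (by rw [sup_comm]; exact hsup) hVm_iso
    have h3 : Module.finrank ℝ Vp + Module.finrank ℝ Vm = 2 * m := by
      rw [← hdim]; exact Submodule.finrank_add_eq_of_isCompl hcompl
    omega
  have hD := aux_fderiv g c B u v hv
  have h2c : (2 : ℝ) * c ≠ 0 := mul_ne_zero two_ne_zero hc
  refine ⟨⟨?_, hVm_m⟩, ?_, ?_⟩
  · -- kernel at 0
    ext y
    simp only [LinearMap.mem_ker, ContinuousLinearMap.coe_coe]
    have hf0 : fderiv ℝ v 0 y = B y + c • y := by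
      rw [hD 0 y]; simp
    rw [hf0]
    constructor
    · intro h
      obtain ⟨p, hp, q, hq, rfl⟩ := hdecomp y
      have hB' : B (p + q) + c • (p + q) = (2 * c) • p := by
        rw [map_add, hBp p hp, hBm q hq]; module
      rw [hB'] at h
      have hp0 : p = 0 := by
        rcases smul_eq_zero.mp h with h' | h'
        · exact absurd h' h2c
        · exact h'
      rw [hp0, zero_add]; exact hq
    · intro h
      rw [hBm y h]; module
  · -- zeros of v
    intro x hx hux
    rw [hv x, hBm x hx, hVm_iso x hx x hx, hux]
    simp
  · -- kernel at x
    intro x hx hxne hux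
    constructor
    · ext y
      simp only [LinearMap.mem_ker, ContinuousLinearMap.coe_coe, Submodule.mem_inf]
      have hf : fderiv ℝ v x y = B y + c • y + (2 * g u y) • x - (2 * g x y) • u := by
        rw [hD x y, hux, hg_symm y x, ← two_mul]
        simp
      rw [hf]
      constructor
      · intro h
        obtain ⟨p, hp, q, hq, rfl⟩ := hdecomp y
        have hB' : B (p + q) + c • (p + q) = (2 * c) • p := by
          rw [map_add, hBp p hp, hBm q hq]; module
        rw [hB'] at h
        have hxu : g x u = 0 := by rw [hg_symm x u]; exact hux
        have hgxpq : g x (p + q) = 0 := by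
          have h2 := congrArg (g x) h
          simp only [map_add, map_sub, map_smul, map_zero, smul_eq_mul,
            hVm_iso x hx x hx, hxu, mul_zero, sub_zero, add_zero] at h2
          have hxp : g x p = 0 := by
            rcases mul_eq_zero.mp h2 with h' | h'
            · exact absurd h' h2c
            · exact h'
          rw [map_add, hxp, hVm_iso x hx q hq, add_zero]
        rw [hgxpq, mul_zero, zero_smul, sub_zero] at h
        have hmem : (2 * c) • p ∈ Vp ⊓ Vm := by
          refine ⟨Submodule.smul_mem _ _ hp, ?_⟩
          have : (2 * c) • p = -((2 * g u (p + q)) • x) := by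
            rw [eq_neg_iff_add_eq_zero]; exact h
          rw [this]
          exact Submodule.neg_mem _ (Submodule.smul_mem _ _ hx)
        rw [hcompl.inf_eq_bot, Submodule.mem_bot] at hmem
        have hp0 : p = 0 := by
          rcases smul_eq_zero.mp hmem with h' | h'
          · exact absurd h' h2c
          · exact h'
        subst hp0
        rw [zero_add] at h ⊢
        refine ⟨hq, ?_⟩
        have : (2 * g u q) • x = 0 := by
          have h7 := h; rwa [smul_zero, zero_add] at h7
        rcases smul_eq_zero.mp this with h' | h'
        · have : g u q = 0 := by linarith
          simpa [LinearMap.mem_ker] using this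
        · exact absurd h' hxne
      · rintro ⟨hyVm, hyk⟩
        have hyu : g u y = 0 := hyk
        rw [hBm y hyVm, hyu, hVm_iso x hx y hyVm]
        simp
    · -- dimension m - 1
      have hfne : ∃ y₀ : Vm, g u (y₀ : V) ≠ 0 := by
        by_contra hcon
        push_neg at hcon
        apply hu
        obtain ⟨a, ha, b, hb, hab⟩ := hdecomp u
        have ha0 : a = 0 := by
          apply hg_nondeg
          intro y
          obtain ⟨p, hp, q, hq, rfl⟩ := hdecomp y
          have h1 : g a p = 0 := hVp_iso a ha p hp
          have h2 : g a q = 0 := by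
            have h3 : g u q = 0 := hcon ⟨q, hq⟩
            have h4 : g b q = 0 := hVm_iso b hb q hq
            have h5 : g u q = g a q + g b q := by rw [hab, map_add, LinearMap.add_apply]
            rw [h3, h4, add_zero] at h5
            exact h5.symm
          rw [map_add, h1, h2, add_zero]
        rw [hab, ha0, zero_add]; exact hb
      obtain ⟨y₀, hy₀⟩ := hfne
      set f : Vm →ₗ[ℝ] ℝ := (g u).domRestrict Vm with hfdef
      have hrange : LinearMap.range f = ⊤ := by
        rw [LinearMap.range_eq_top]
        intro r
        refine ⟨(r / g u y₀) • y₀, ?_⟩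
        simp only [hfdef, map_smul, LinearMap.domRestrict_apply, Submodule.coe_smul,
          smul_eq_mul]
        field_simp
      have hker : Submodule.map Vm.subtype (LinearMap.ker f) = Vm ⊓ LinearMap.ker (g u) := by
        have hk : LinearMap.ker f = (LinearMap.ker (g u)).comap Vm.subtype := by
          ext z; simp [hfdef, LinearMap.mem_ker]
        rw [hk, Submodule.map_comap_subtype]
      have h5 : Module.finrank ℝ (Vm ⊓ LinearMap.ker (g u) : Submodule ℝ V)
          = Module.finrank ℝ (LinearMap.ker f) := by
        rw [← hker, Submodule.finrank_map_subtype_eq]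
      have h6 := LinearMap.finrank_range_add_finrank_ker f
      rw [hrange, finrank_top, Module.finrank_self, hVm_m] at h6
      omega
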